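/- arXiv:2512.20031 — 4 statements merged into one kernel-verified Lean document; each statement's English description precedes it below -/
import Mathlib

section
/- Let ν ∈ ℝ^d be a vector of positive integers, p ∈ (1,∞)^d, and define A = diag(1/(p_1−1), …, 1/(p_d−1)) (𝟙 νᵀ − I), where 𝟙 is the all-ones vector. Then A is an entrywise nonnegative irreducible matrix (assuming d ≥ 2, or ν_1 ≥ 2 when d = 1), and its spectral radius satisfies ρ(A) < 1 if and only if ∑_{i=1}^d ν_i/p_i < 1, and ρ(A) = 1 if and only if ∑_{i=1}^d ν_i/p_i = 1. -/
open scoped BigOperators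

/-- Spectral radius of a real square matrix: the supremum of the moduli of its
complex eigenvalues. -/
noncomputable def specRad {n : ℕ} (A : Matrix (Fin n) (Fin n) ℝ) : ℝ :=
  sSup {r : ℝ | ∃ μ : ℂ, μ ∈ spectrum ℂ (A.map (algebraMap ℝ ℂ)) ∧ r = ‖μ‖}

/-- A matrix is irreducible if for every nonempty proper subset `S` of indices there
is an edge from `S` to its complement. -/
def MatIrred {n : ℕ} (A : Matrix (Fin n) (Fin n) ℝ) : Prop :=
  ∀ S : Set (Fin n), S.Nonempty → S ≠ Set.univ → ∃ i ∈ S, ∃ j ∉ S, A i j ≠ 0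


/-- From a real eigenvector, membership in the complex spectrum. -/
lemma mem_spec_of_eigen {d : ℕ} (A : Matrix (Fin d) (Fin d) ℝ)
    (w : Fin d → ℝ) (hw : w ≠ 0) (lam : ℝ) (h : A.mulVec w = lam • w) :
    (lam : ℂ) ∈ spectrum ℂ (A.map (algebraMap ℝ ℂ)) := by
  rw [spectrum.mem_iff]
  intro hu
  rw [Matrix.isUnit_iff_isUnit_det, isUnit_iff_ne_zero] at hu
  apply hu
  rw [← Matrix.exists_mulVec_eq_zero_iff]
  refine ⟨fun i => (w i : ℂ), ?_, ?_⟩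
  · intro h0
    apply hw
    funext i
    have := congrFun h0 i
    simpa using this
  · rw [Algebra.algebraMap_eq_smul_one, Matrix.sub_mulVec,
      Matrix.smul_mulVec, Matrix.one_mulVec]
    funext i
    have hAi : (A.map (algebraMap ℝ ℂ)).mulVec (fun i => (w i : ℂ)) i
        = ((A.mulVec w i : ℝ) : ℂ) := by
      simp only [Matrix.mulVec, dotProduct, Matrix.map_apply]
      push_cast
      rfl
    have h2 := congrFun h i
    simp only [Pi.smul_apply, smul_eq_mul] at h2
    simp only [Pi.sub_apply, Pi.smul_apply, smul_eq_mul, hAi, h2, Pi.zero_apply]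
    push_cast
    ring

/-- From spectrum membership, a complex eigenvector. -/
lemma eigen_of_mem_spec {d : ℕ} (A : Matrix (Fin d) (Fin d) ℝ)
    (μ : ℂ) (hμ : μ ∈ spectrum ℂ (A.map (algebraMap ℝ ℂ))) :
    ∃ v : Fin d → ℂ, v ≠ 0 ∧ (A.map (algebraMap ℝ ℂ)).mulVec v = μ • v := by
  rw [spectrum.mem_iff, Matrix.isUnit_iff_isUnit_det, isUnit_iff_ne_zero, not_not,
    ← Matrix.exists_mulVec_eq_zero_iff] at hμ
  obtain ⟨v, hv0, hv⟩ := hμ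
  refine ⟨v, hv0, ?_⟩
  rw [Algebra.algebraMap_eq_smul_one, Matrix.sub_mulVec,
    Matrix.smul_mulVec, Matrix.one_mulVec, sub_eq_zero] at hv
  exact hv.symm

/-- Perron-type bound: if `b > 0` and `A b ≤ c b` entrywise, every complex
eigenvalue modulus is at most `c`. -/
lemma eig_abs_le {d : ℕ} (A : Matrix (Fin d) (Fin d) ℝ) (hA : ∀ i j, 0 ≤ A i j)
    (b : Fin d → ℝ) (hb : ∀ i, 0 < b i) (c : ℝ)
    (hc : ∀ i, A.mulVec b i ≤ c * b i)
    (μ : ℂ) (hμ : μ ∈ spectrum ℂ (A.map (algebraMap ℝ ℂ))) :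
    ‖μ‖ ≤ c := by
  obtain ⟨v, hv0, hv⟩ := eigen_of_mem_spec A μ hμ
  obtain ⟨j₀, hj₀⟩ : ∃ j, v j ≠ 0 := by
    by_contra hcon
    push_neg at hcon
    exact hv0 (funext hcon)
  obtain ⟨i₀, -, hmax⟩ := Finset.exists_max_image Finset.univ
    (fun i => ‖v i‖ / b i) ⟨j₀, Finset.mem_univ j₀⟩
  set t := ‖v i₀‖ / b i₀ with ht
  have ht0 : 0 < t := by
    have h1 : ‖v j₀‖ / b j₀ ≤ t := hmax j₀ (Finset.mem_univ j₀)
    have h2 : 0 < ‖v j₀‖ / b j₀ :=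
      div_pos (by simpa using hj₀) (hb j₀)
    linarith
  have hvb : ∀ j, ‖v j‖ ≤ t * b j := by
    intro j
    have := hmax j (Finset.mem_univ j)
    rw [div_le_iff₀ (hb j)] at this
    linarith [this]
  have hvi₀ : ‖v i₀‖ = t * b i₀ := by
    rw [ht, div_mul_cancel₀]
    exact ne_of_gt (hb i₀)
  have key : ‖μ‖ * (t * b i₀) ≤ t * (c * b i₀) := by
    rw [← hvi₀, ← norm_mul]
    have h1 : μ * v i₀ = (A.map (algebraMap ℝ ℂ)).mulVec v i₀ := by
      have := congrFun hv i₀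
      simp only [Pi.smul_apply, smul_eq_mul] at this
      exact this.symm
    rw [h1]
    have h2 : ‖(A.map (algebraMap ℝ ℂ)).mulVec v i₀‖
        ≤ ∑ j, A i₀ j * ‖v j‖ := by
      refine le_trans (norm_sum_le Finset.univ (fun j => (A.map (algebraMap ℝ ℂ)) i₀ j * v j)) ?_
      apply Finset.sum_le_sum
      intro j _
      simp only [Matrix.map_apply, norm_mul]
      have h5 : ‖(algebraMap ℝ ℂ) (A i₀ j)‖ = A i₀ j := by
        simp [Complex.norm_real, abs_of_nonneg (hA i₀ j)]
      rw [h5]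
    refine le_trans h2 ?_
    have h3 : ∑ j, A i₀ j * ‖v j‖ ≤ ∑ j, A i₀ j * (t * b j) := by
      apply Finset.sum_le_sum
      intro j _
      exact mul_le_mul_of_nonneg_left (hvb j) (hA i₀ j)
    refine le_trans h3 ?_
    have h4 : ∑ j, A i₀ j * (t * b j) = t * A.mulVec b i₀ := by
      simp only [Matrix.mulVec, dotProduct, Finset.mul_sum]
      apply Finset.sum_congr rfl
      intro j _
      ring
    rw [h4]
    exact mul_le_mul_of_nonneg_left (hc i₀) (le_of_lt ht0)
  have hpos : 0 < t * b i₀ := mul_pos ht0 (hb i₀)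
  have key2 : ‖μ‖ * (t * b i₀) ≤ c * (t * b i₀) := by
    calc ‖μ‖ * (t * b i₀) ≤ t * (c * b i₀) := key
      _ = c * (t * b i₀) := by ring
  exact le_of_mul_le_mul_right key2 hpos

/-- For `A = diag(1/(p₁−1),…,1/(p_d−1)) (𝟙νᵀ − I)` with `ν` positive integers and
`p ∈ (1,∞)^d`, the matrix `A` is nonnegative and irreducible, and
`ρ(A) < 1 ↔ ∑ νᵢ/pᵢ < 1` and `ρ(A) = 1 ↔ ∑ νᵢ/pᵢ = 1`. -/
theorem specRad_lt_one_iff_sum_lt_one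
    {d : ℕ} (ν : Fin d → ℕ) (hν : ∀ i, 1 ≤ ν i)
    (p : Fin d → ℝ) (hp : ∀ i, 1 < p i)
    (hd : 2 ≤ d ∨ (d = 1 ∧ ∀ i, 2 ≤ ν i))
    (A : Matrix (Fin d) (Fin d) ℝ)
    (hA : ∀ i j, A i j = (1 / (p i - 1)) * ((ν j : ℝ) - if i = j then 1 else 0)) :
    (∀ i j, 0 ≤ A i j) ∧ MatIrred A ∧
      (specRad A < 1 ↔ ∑ i, (ν i : ℝ) / p i < 1) ∧
      (specRad A = 1 ↔ ∑ i, (ν i : ℝ) / p i = 1) := by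
  have hp0 : ∀ i, 0 < p i := fun i => lt_trans one_pos (hp i)
  have hp1 : ∀ i, 0 < p i - 1 := fun i => sub_pos.mpr (hp i)
  have hup : ∀ i, 0 < 1 / (p i - 1) := fun i => div_pos one_pos (hp1 i)
  have hνr : ∀ i, (1:ℝ) ≤ (ν i : ℝ) := fun i => by exact_mod_cast hν i
  -- nonnegativity
  have hApos : ∀ i j, 0 ≤ A i j := by
    intro i j
    rw [hA]
    apply mul_nonneg (le_of_lt (hup i))
    by_cases h : i = j
    · rw [if_pos h]; linarith [hνr j]
    · rw [if_neg h]; linarith [hνr j]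
  -- irreducibility
  have hIrr : MatIrred A := by
    intro S hS hSne
    obtain ⟨i, hi⟩ := hS
    obtain ⟨j, hj⟩ : ∃ j, j ∉ S := by
      by_contra hcon; push_neg at hcon
      exact hSne (Set.eq_univ_iff_forall.mpr hcon)
    refine ⟨i, hi, j, hj, ?_⟩
    have hij : i ≠ j := fun h => hj (h ▸ hi)
    rw [hA, if_neg hij, sub_zero]
    exact ne_of_gt (mul_pos (hup i) (by linarith [hνr j]))
  -- mulVec formula
  have hsum : ∀ (x : Fin d → ℝ) (i : Fin d),
      A.mulVec x i = (1 / (p i - 1)) * ((∑ j, (ν j : ℝ) * x j) - x i) := by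
    intro x i
    have hterm : ∀ j, A i j * x j
        = (1 / (p i - 1)) * ((ν j : ℝ) * x j)
          - (if i = j then (1 / (p i - 1)) * x j else 0) := by
      intro j
      rw [hA]
      by_cases h : i = j
      · rw [if_pos h, if_pos h]; ring
      · rw [if_neg h, if_neg h]; ring
    calc A.mulVec x i = ∑ j, A i j * x j := by
          simp [Matrix.mulVec, dotProduct]
      _ = ∑ j, ((1 / (p i - 1)) * ((ν j : ℝ) * x j)
            - (if i = j then (1 / (p i - 1)) * x j else 0)) :=
          Finset.sum_congr rfl (fun j _ => hterm j)
      _ = (∑ j, (1 / (p i - 1)) * ((ν j : ℝ) * x j))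
            - ∑ j, (if i = j then (1 / (p i - 1)) * x j else 0) :=
          Finset.sum_sub_distrib _ _
      _ = (1 / (p i - 1)) * (∑ j, (ν j : ℝ) * x j) - (1 / (p i - 1)) * x i := by
          rw [← Finset.mul_sum, Finset.sum_ite_eq, if_pos (Finset.mem_univ i)]
      _ = _ := by ring
  set Ssum := ∑ i, (ν i : ℝ) / p i with hSsum
  have hd1 : 0 < d := by rcases hd with h | ⟨h, _⟩ <;> omega
  have hne : (Finset.univ : Finset (Fin d)).Nonempty := ⟨⟨0, hd1⟩, Finset.mem_univ _⟩
  set b : Fin d → ℝ := fun i => 1 / p i with hbdef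
  have hb : ∀ i, 0 < b i := fun i => div_pos one_pos (hp0 i)
  have hsumb : ∑ j, (ν j : ℝ) * b j = Ssum := by
    rw [hSsum]
    apply Finset.sum_congr rfl
    intro j _
    rw [hbdef, mul_one_div]
  have hAb : ∀ i, A.mulVec b i = b i + (Ssum - 1) / (p i - 1) := by
    intro i
    rw [hsum, hsumb, hbdef]
    have h1 : p i - 1 ≠ 0 := ne_of_gt (hp1 i)
    have h2 : p i ≠ 0 := ne_of_gt (hp0 i)
    field_simp
    ring
  set g : Fin d → ℝ := fun i => 1 + p i * (Ssum - 1) / (p i - 1) with hgdef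
  set c_ub := Finset.univ.sup' hne g with hcub
  have hg : ∀ i, A.mulVec b i = g i * b i := by
    intro i
    rw [hAb, hgdef, hbdef]
    have h1 : p i - 1 ≠ 0 := ne_of_gt (hp1 i)
    have h2 : p i ≠ 0 := ne_of_gt (hp0 i)
    field_simp
  have hcb : ∀ i, A.mulVec b i ≤ c_ub * b i := by
    intro i
    rw [hg i]
    exact mul_le_mul_of_nonneg_right (Finset.le_sup' g (Finset.mem_univ i))
      (le_of_lt (hb i))
  have hub : ∀ μ ∈ spectrum ℂ (A.map (algebraMap ℝ ℂ)), ‖μ‖ ≤ c_ub :=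
    fun μ hμ => eig_abs_le A hApos b hb c_ub hcb μ hμ
  have hbddset : BddAbove {r : ℝ | ∃ μ : ℂ,
      μ ∈ spectrum ℂ (A.map (algebraMap ℝ ℂ)) ∧ r = ‖μ‖} := by
    refine ⟨c_ub, ?_⟩
    rintro r ⟨μ, hμ, rfl⟩
    exact hub μ hμ
  have main_lt : Ssum < 1 → specRad A < 1 := by
    intro h
    have hcub1 : c_ub < 1 := by
      rw [hcub, Finset.sup'_lt_iff]
      intro i _
      rw [hgdef]
      have hneg : p i * (Ssum - 1) / (p i - 1) < 0 :=
        div_neg_of_neg_of_pos (mul_neg_of_pos_of_neg (hp0 i) (by linarith)) (hp1 i)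
      simp only []
      linarith
    have hle : specRad A ≤ max c_ub 0 := by
      rw [specRad]
      apply Real.sSup_le
      · rintro r ⟨μ, hμ, rfl⟩
        exact le_max_of_le_left (hub μ hμ)
      · exact le_max_right _ _
    exact lt_of_le_of_lt hle (max_lt hcub1 one_pos)
  have main_eq : Ssum = 1 → specRad A = 1 := by
    intro h
    have heig : A.mulVec b = (1:ℝ) • b := by
      funext i
      rw [hAb, h]
      simp
    have hb0 : b ≠ 0 := by
      intro h0
      have := congrFun h0 ⟨0, hd1⟩
      simp only [Pi.zero_apply] at this
      exact absurd this (ne_of_gt (hb _))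
    have h1mem : (1:ℝ) ∈ {r : ℝ | ∃ μ : ℂ,
        μ ∈ spectrum ℂ (A.map (algebraMap ℝ ℂ)) ∧ r = ‖μ‖} := by
      refine ⟨(1:ℂ), ?_, by simp⟩
      have := mem_spec_of_eigen A b hb0 1 heig
      simpa using this
    rw [specRad]
    apply le_antisymm
    · apply Real.sSup_le
      · rintro r ⟨μ, hμ, rfl⟩
        refine le_trans (hub μ hμ) ?_
        rw [hcub]
        apply Finset.sup'_le
        intro i _
        rw [hgdef, h]
        simp
      · exact zero_le_one
    · exact le_csSup hbddset h1mem
  have main_gt : 1 < Ssum → 1 < specRad A := by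
    intro h
    set u : Fin d → ℝ := fun i => 1 / (p i - 1) with hudef
    set f : ℝ → ℝ := fun lam => ∑ j, (ν j : ℝ) * (u j / (u j + lam)) with hfdef
    have hu0 : ∀ j, 0 < u j := hup
    have hsumnu : 0 < ∑ j, (ν j : ℝ) * u j := by
      apply Finset.sum_pos
      · intro j _
        exact mul_pos (by linarith [hνr j]) (hu0 j)
      · exact hne
    set R : ℝ := 1 + ∑ j, (ν j : ℝ) * u j with hRdef
    have hR1 : (1:ℝ) < R := by rw [hRdef]; linarith
    have hcont : ContinuousOn f (Set.Icc 1 R) := by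
      apply continuousOn_finset_sum
      intro j _
      apply ContinuousOn.mul continuousOn_const
      apply ContinuousOn.div continuousOn_const
      · exact continuousOn_const.add continuousOn_id
      · intro x hx
        have : (1:ℝ) ≤ x := hx.1
        have := hu0 j
        positivity
    have hf1 : f 1 = Ssum := by
      rw [hfdef, hSsum]
      apply Finset.sum_congr rfl
      intro j _
      have h1 : p j - 1 ≠ 0 := ne_of_gt (hp1 j)
      have h2 : p j ≠ 0 := ne_of_gt (hp0 j)
      have h4 : u j / (u j + 1) = 1 / p j := by
        have hj : u j = 1 / (p j - 1) := rfl
        rw [hj]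
        rw [div_eq_div_iff (by have := hup j; linarith) (ne_of_gt (hp0 j))]
        field_simp
        ring
      rw [h4, mul_one_div]
    have hfR : f R < 1 := by
      have hstep : f R ≤ (∑ j, (ν j : ℝ) * u j) / R := by
        rw [hfdef, Finset.sum_div]
        apply Finset.sum_le_sum
        intro j _
        rw [mul_div_assoc]
        apply mul_le_mul_of_nonneg_left _ (by linarith [hνr j])
        apply div_le_div_of_nonneg_left (le_of_lt (hu0 j)) (by linarith) (by linarith [hu0 j])
      have : (∑ j, (ν j : ℝ) * u j) / R < 1 := by
        rw [div_lt_one (by linarith)]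
        linarith
      linarith
    have hmem1 : (1:ℝ) ∈ Set.Icc (f R) (f 1) := ⟨le_of_lt hfR, by rw [hf1]; linarith⟩
    obtain ⟨lam, hlam, hflam⟩ := intermediate_value_Icc' (le_of_lt hR1) hcont hmem1
    have hlam1 : 1 < lam := by
      rcases lt_or_eq_of_le hlam.1 with h' | h'
      · exact h'
      · exfalso
        rw [← h'] at hflam
        rw [hf1] at hflam
        linarith
    set w : Fin d → ℝ := fun j => u j / (u j + lam) with hwdef
    have hw0 : ∀ j, 0 < w j := by
      intro j
      exact div_pos (hu0 j) (by linarith [hu0 j])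
    have hwsum : ∑ j, (ν j : ℝ) * w j = 1 := hflam
    have heig : A.mulVec w = lam • w := by
      funext i
      rw [hsum, hwsum]
      simp only [Pi.smul_apply, smul_eq_mul]
      have h1 : p i - 1 ≠ 0 := ne_of_gt (hp1 i)
      have h2 : 1 / (p i - 1) + lam ≠ 0 := by
        have := hup i
        linarith
      have hwi : w i = (1 / (p i - 1)) / (1 / (p i - 1) + lam) := rfl
      have h3 : 1 - lam + lam * p i ≠ 0 := by nlinarith [hp1 i, hlam1]
      rw [hwi]
      field_simp
      have hz : (1 - lam + lam * p i) * (1 - lam + lam * p i)⁻¹ = 1 :=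
        mul_inv_cancel₀ h3
      linear_combination -hz
    have hwne : w ≠ 0 := by
      intro h0
      have := congrFun h0 ⟨0, hd1⟩
      simp only [Pi.zero_apply] at this
      exact absurd this (ne_of_gt (hw0 _))
    have hmem : lam ∈ {r : ℝ | ∃ μ : ℂ,
        μ ∈ spectrum ℂ (A.map (algebraMap ℝ ℂ)) ∧ r = ‖μ‖} := by
      refine ⟨(lam : ℂ), mem_spec_of_eigen A w hwne lam heig, ?_⟩
      rw [Complex.norm_real, Real.norm_eq_abs, abs_of_pos (by linarith)]
    have : lam ≤ specRad A := by
      rw [specRad]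
      exact le_csSup hbddset hmem
    linarith
  rcases lt_trichotomy Ssum 1 with hc | hc | hc
  · refine ⟨hApos, hIrr, ⟨fun _ => hc, fun _ => main_lt hc⟩, ?_⟩
    constructor
    · intro heq
      exact absurd (main_lt hc) (by rw [heq]; exact lt_irrefl 1)
    · intro heq; linarith
  · refine ⟨hApos, hIrr, ?_, ⟨fun _ => hc, fun _ => main_eq hc⟩⟩
    constructor
    · intro hlt
      rw [main_eq hc] at hlt
      exact absurd hlt (lt_irrefl 1)
    · intro hlt; linarith
  · refine ⟨hApos, hIrr, ?_, ?_⟩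
    · constructor
      · intro hlt; linarith [main_gt hc]
      · intro hlt; linarith
    · constructor
      · intro heq; linarith [main_gt hc]
      · intro heq; linarith
end

section
/- Let M ∈ ℝ^{n×n} be an irreducible singular M-matrix (i.e., M = ρ(B)I − B for some irreducible nonnegative matrix B). If y ∈ ℝ^n satisfies M y ≥ 0 entrywise and 𝟙ᵀ y = 1, then M y = 0 and y > 0 entrywise. Moreover, there exists a unique y ∈ ℝ_{>0}^n with M y = 0 and 𝟙ᵀ y = 1. -/
open scoped BigOperators

namespace PerronAux

open Matrix Finset

variable {n : ℕ}

lemma mulVec_apply' (A : Matrix (Fin n) (Fin n) ℝ) (x : Fin n → ℝ) (i : Fin n) :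
    (A *ᵥ x) i = ∑ j, A i j * x j := rfl

lemma pow_entry_nonneg {B : Matrix (Fin n) (Fin n) ℝ} (hB : ∀ i j, 0 ≤ B i j) (k : ℕ) :
    ∀ i j, 0 ≤ ((1 + B) ^ k) i j := by
  induction k with
  | zero =>
    intro i j
    rw [pow_zero, Matrix.one_apply]
    split <;> norm_num
  | succ k ih =>
    intro i j
    rw [pow_succ, Matrix.mul_apply]
    refine Finset.sum_nonneg fun l _ => mul_nonneg (ih i l) ?_
    rw [Matrix.add_apply, Matrix.one_apply]
    have := hB l j
    split <;> linarith

lemma mulVec_nonneg {A : Matrix (Fin n) (Fin n) ℝ} (hA : ∀ i j, 0 ≤ A i j)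
    {x : Fin n → ℝ} (hx : ∀ i, 0 ≤ x i) : ∀ i, 0 ≤ (A *ᵥ x) i := fun i => by
  rw [mulVec_apply']
  exact Finset.sum_nonneg fun j _ => mul_nonneg (hA i j) (hx j)

lemma mulVec_mono {A : Matrix (Fin n) (Fin n) ℝ} (hA : ∀ i j, 0 ≤ A i j)
    {x y : Fin n → ℝ} (hxy : ∀ i, x i ≤ y i) : ∀ i, (A *ᵥ x) i ≤ (A *ᵥ y) i := by
  intro i
  have h := mulVec_nonneg hA (x := y - x) (fun j => sub_nonneg.2 (hxy j)) i
  rw [Matrix.mulVec_sub] at h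
  have : 0 ≤ (A *ᵥ y) i - (A *ᵥ x) i := h
  linarith

lemma comm_pow {B : Matrix (Fin n) (Fin n) ℝ} (k : ℕ) (v : Fin n → ℝ) :
    B *ᵥ (((1 + B) ^ k) *ᵥ v) = ((1 + B) ^ k) *ᵥ (B *ᵥ v) := by
  have hc : Commute B ((1 + B) ^ k) :=
    (Commute.add_right (Commute.one_right B) (Commute.refl B)).pow_right k
  rw [Matrix.mulVec_mulVec, Matrix.mulVec_mulVec, hc.eq]

/-- Powers of `1+B` applied to a nonnegative nonzero vector are strictly positive. -/
lemma pow_mulVec_pos (hn : 0 < n) {B : Matrix (Fin n) (Fin n) ℝ} (hB : ∀ i j, 0 ≤ B i j)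
    (hirr : MatIrred B) {x : Fin n → ℝ} (hx : ∀ i, 0 ≤ x i) (hx0 : ∃ i, 0 < x i) :
    ∀ i, 0 < (((1 + B) ^ (n - 1)) *ᵥ x) i := by
  classical
  set u : ℕ → Fin n → ℝ := fun k => ((1 + B) ^ k) *ᵥ x with hu
  have hnn : ∀ k i, 0 ≤ u k i := fun k => mulVec_nonneg (pow_entry_nonneg hB k) hx
  have hstep : ∀ k, u (k + 1) = u k + B *ᵥ u k := by
    intro k
    have h1 : (1 + B) ^ (k + 1) = (1 + B) * (1 + B) ^ k := by
      rw [← pow_succ']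
    rw [hu]
    simp only [h1, ← Matrix.mulVec_mulVec, Matrix.add_mulVec, Matrix.one_mulVec]
  have hmono : ∀ k i, u k i ≤ u (k + 1) i := by
    intro k i
    rw [hstep k]
    have := mulVec_nonneg hB (hnn k) i
    simp only [Pi.add_apply]
    linarith
  set S : ℕ → Finset (Fin n) := fun k => univ.filter (fun i => 0 < u k i) with hS
  have hsub : ∀ k, S k ⊆ S (k + 1) := by
    intro k i hi
    simp only [hS, mem_filter, mem_univ, true_and] at hi ⊢
    exact lt_of_lt_of_le hi (hmono k i)
  have hS0 : (S 0).Nonempty := by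
    obtain ⟨i, hi⟩ := hx0
    refine ⟨i, ?_⟩
    simp only [hS, mem_filter, mem_univ, true_and, hu]
    simpa [pow_zero, Matrix.one_mulVec] using hi
  have hSne : ∀ k, (S k).Nonempty := by
    intro k
    induction k with
    | zero => exact hS0
    | succ k ih => exact ih.mono (hsub k)
  have hgrow : ∀ k, S k = univ ∨ k + 1 ≤ (S k).card := by
    intro k
    induction k with
    | zero =>
      by_cases h : S 0 = univ
      · exact Or.inl h
      · exact Or.inr (Finset.card_pos.mpr hS0)
    | succ k ih =>
      by_cases h : S (k + 1) = univ
      · exact Or.inl h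
      rcases ih with h' | h'
      · exact absurd (Finset.eq_univ_iff_forall.mpr fun i =>
          hsub k (h' ▸ mem_univ i)) h
      -- S k is a proper subset, find a new element
      have hkne : S k ≠ univ := by
        intro hk
        exact h (Finset.eq_univ_iff_forall.mpr fun i => hsub k (hk ▸ mem_univ i))
      have hinotall : ∃ i, i ∉ S k := by
        by_contra hc
        push_neg at hc
        exact hkne (Finset.eq_univ_iff_forall.mpr hc)
      obtain ⟨i0, hi0⟩ := hinotall
      have hC1 : ((↑(S k) : Set (Fin n))ᶜ).Nonempty := ⟨i0, by simpa using hi0⟩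
      have hC2 : ((↑(S k) : Set (Fin n))ᶜ) ≠ Set.univ := by
        obtain ⟨j0, hj0⟩ := hSne k
        intro hcc
        have : j0 ∈ ((↑(S k) : Set (Fin n))ᶜ) := hcc ▸ Set.mem_univ j0
        exact this (by simpa using hj0)
      obtain ⟨a, haC, b, hbC, hab⟩ := hirr _ hC1 hC2
      have haS : a ∉ S k := by simpa using haC
      have hbS : b ∈ S k := by simpa using hbC
      have hub : 0 < u k b := by
        simpa [hS, mem_filter] using hbS
      have hBab : 0 < B a b := lt_of_le_of_ne (hB a b) (Ne.symm hab)
      have hnew : 0 < u (k + 1) a := by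
        have hsum : B a b * u k b ≤ (B *ᵥ u k) a := by
          rw [mulVec_apply']
          exact Finset.single_le_sum
            (fun j _ => mul_nonneg (hB a j) (hnn k j)) (mem_univ b)
        have := hnn k a
        rw [hstep k]
        simp only [Pi.add_apply]
        nlinarith [mul_pos hBab hub]
      have haS1 : a ∈ S (k + 1) := by
        simp only [hS, mem_filter, mem_univ, true_and]
        exact hnew
      have hins : insert a (S k) ⊆ S (k + 1) :=
        Finset.insert_subset haS1 (hsub k)
      have hcard : (S k).card + 1 ≤ (S (k + 1)).card := by
        have := Finset.card_le_card hins
        rwa [Finset.card_insert_of_notMem haS] at this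
      exact Or.inr (by omega)
  intro i
  have hfin : S (n - 1) = univ := by
    rcases hgrow (n - 1) with h | h
    · exact h
    · have h1 : n - 1 + 1 = n := Nat.succ_pred_eq_of_pos hn
      have h2 : (S (n - 1)).card ≤ n := by
        simpa using Finset.card_le_univ (S (n - 1))
      have h3 : (S (n - 1)).card = n := by omega
      exact Finset.eq_univ_of_card _ (by simpa using h3)
  have : i ∈ S (n - 1) := hfin ▸ mem_univ i
  simpa [hS, mem_filter, hu] using this

lemma pow_one_add_mulVec {B : Matrix (Fin n) (Fin n) ℝ} {r : ℝ} {z : Fin n → ℝ}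
    (hz : B *ᵥ z = r • z) (k : ℕ) : ((1 + B) ^ k) *ᵥ z = (1 + r) ^ k • z := by
  induction k with
  | zero => simp [Matrix.one_mulVec]
  | succ k ih =>
    have h1 : (1 + B) ^ (k + 1) = (1 + B) * (1 + B) ^ k := by rw [← pow_succ']
    rw [h1, ← Matrix.mulVec_mulVec, ih, Matrix.mulVec_smul, Matrix.add_mulVec,
      Matrix.one_mulVec, hz]
    funext i
    simp only [Pi.smul_apply, Pi.add_apply, smul_eq_mul]
    ring

lemma eigen_multiple (hn : 0 < n) {B : Matrix (Fin n) (Fin n) ℝ} (hB : ∀ i j, 0 ≤ B i j)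
    (hirr : MatIrred B) {w : Fin n → ℝ} (hw : ∀ i, 0 < w i) {r : ℝ}
    (hBw : B *ᵥ w = r • w) {y : Fin n → ℝ} (hy : B *ᵥ y = r • y) :
    ∃ t : ℝ, y = t • w := by
  classical
  have hne : (Finset.univ : Finset (Fin n)).Nonempty := ⟨⟨0, hn⟩, mem_univ _⟩
  obtain ⟨i0, _, hi0⟩ := Finset.exists_mem_eq_inf' hne (fun i => y i / w i)
  set t := Finset.univ.inf' hne (fun i => y i / w i) with ht
  refine ⟨t, ?_⟩
  set z := y - t • w with hzdef
  have hz0 : ∀ i, 0 ≤ z i := by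
    intro i
    have h1 : t ≤ y i / w i := Finset.inf'_le _ (mem_univ i)
    have h2 : t * w i ≤ y i := (le_div_iff₀ (hw i)).mp h1
    simp only [hzdef, Pi.sub_apply, Pi.smul_apply, smul_eq_mul]
    linarith
  have hzi0 : z i0 = 0 := by
    simp only [hzdef, Pi.sub_apply, Pi.smul_apply, smul_eq_mul]
    rw [hi0, div_mul_cancel₀ _ (hw i0).ne']
    ring
  by_contra hne'
  have hzne : z ≠ 0 := fun hzz => hne' (by rwa [hzdef, sub_eq_zero] at hzz)
  have hzpos : ∃ i, 0 < z i := by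
    obtain ⟨i, hi⟩ := Function.ne_iff.mp hzne
    exact ⟨i, lt_of_le_of_ne (hz0 i) (Ne.symm (by simpa using hi))⟩
  have hBz : B *ᵥ z = r • z := by
    rw [hzdef, Matrix.mulVec_sub, Matrix.mulVec_smul, hBw, hy, smul_sub, smul_comm]
  have hcontr := pow_mulVec_pos hn hB hirr hz0 hzpos i0
  rw [pow_one_add_mulVec hBz] at hcontr
  simp only [Pi.smul_apply, smul_eq_mul, hzi0, mul_zero] at hcontr
  exact lt_irrefl 0 hcontr

lemma matIrred_transpose {B : Matrix (Fin n) (Fin n) ℝ} (hirr : MatIrred B) :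
    MatIrred Bᵀ := by
  intro S hS hSu
  have h1 : Sᶜ.Nonempty := Set.nonempty_compl.mpr hSu
  have h2 : Sᶜ ≠ Set.univ := by
    obtain ⟨s, hs⟩ := hS
    intro h
    have : s ∈ Sᶜ := h ▸ Set.mem_univ s
    exact this hs
  obtain ⟨i, hiC, j, hjC, hij⟩ := hirr Sᶜ h1 h2
  refine ⟨j, ?_, i, hiC, ?_⟩
  · simpa using hjC
  · simpa [Matrix.transpose_apply] using hij

lemma specRad_transpose (B : Matrix (Fin n) (Fin n) ℝ) : specRad Bᵀ = specRad B := by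
  have hsp : spectrum ℂ (Bᵀ.map (algebraMap ℝ ℂ)) = spectrum ℂ (B.map (algebraMap ℝ ℂ)) := by
    ext μ
    rw [Matrix.transpose_map, spectrum.mem_iff, spectrum.mem_iff,
      Matrix.isUnit_iff_isUnit_det, Matrix.isUnit_iff_isUnit_det]
    have hdet : (algebraMap ℂ (Matrix (Fin n) (Fin n) ℂ) μ - (B.map (algebraMap ℝ ℂ))ᵀ).det
        = (algebraMap ℂ (Matrix (Fin n) (Fin n) ℂ) μ - B.map (algebraMap ℝ ℂ)).det := by
      have heq : algebraMap ℂ (Matrix (Fin n) (Fin n) ℂ) μ - (B.map (algebraMap ℝ ℂ))ᵀ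
          = (algebraMap ℂ (Matrix (Fin n) (Fin n) ℂ) μ - B.map (algebraMap ℝ ℂ))ᵀ := by
        rw [Matrix.transpose_sub, Algebra.algebraMap_eq_smul_one, Matrix.transpose_smul,
          Matrix.transpose_one]
      rw [heq, Matrix.det_transpose]
    rw [hdet]
  unfold specRad
  rw [hsp]

lemma perron (hn : 0 < n) (B : Matrix (Fin n) (Fin n) ℝ) (hB : ∀ i j, 0 ≤ B i j)
    (hirr : MatIrred B) :
    ∃ w : Fin n → ℝ, (∀ i, 0 < w i) ∧ B *ᵥ w = specRad B • w ∧ 0 ≤ specRad B := by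
  classical
  have hne : (Finset.univ : Finset (Fin n)).Nonempty := ⟨⟨0, hn⟩, mem_univ _⟩
  set P : Matrix (Fin n) (Fin n) ℝ := (1 + B) ^ (n - 1) with hPdef
  have hPnn : ∀ i j, 0 ≤ P i j := pow_entry_nonneg hB (n - 1)
  have hpos : ∀ {x : Fin n → ℝ}, (∀ i, 0 ≤ x i) → (∃ i, 0 < x i) → ∀ i, 0 < (P *ᵥ x) i :=
    fun hx hx0 => pow_mulVec_pos hn hB hirr hx hx0
  set g : (Fin n → ℝ) → ℝ := fun v => Finset.univ.inf' hne fun i => (B *ᵥ v) i / v i with hgdef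
  have hΔ : ∀ x ∈ stdSimplex ℝ (Fin n), (∀ i, 0 ≤ x i) ∧ ∃ i, 0 < x i := by
    intro x hx
    refine ⟨hx.1, ?_⟩
    by_contra hc
    push_neg at hc
    have hx0 : ∀ i, x i = 0 := fun i => le_antisymm (hc i) (hx.1 i)
    have hs := hx.2
    rw [Finset.sum_eq_zero (fun i _ => hx0 i)] at hs
    norm_num at hs
  -- continuity of x ↦ g (P *ᵥ x) on the simplex
  have hFcont : ContinuousOn (fun x => g (P *ᵥ x)) (stdSimplex ℝ (Fin n)) := by
    apply ContinuousOn.finset_inf'_apply hne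
      (f := fun i x => (B *ᵥ (P *ᵥ x)) i / (P *ᵥ x) i)
    intro i _
    apply ContinuousOn.div
    · have : Continuous fun x : Fin n → ℝ => (B *ᵥ (P *ᵥ x)) i := by
        simp only [Matrix.mulVec_mulVec]
        simp only [mulVec_apply']
        exact continuous_finset_sum _ fun j _ => (continuous_const.mul (continuous_apply j))
      exact this.continuousOn
    · have : Continuous fun x : Fin n → ℝ => (P *ᵥ x) i := by
        simp only [mulVec_apply']
        exact continuous_finset_sum _ fun j _ => (continuous_const.mul (continuous_apply j))
      exact this.continuousOn
    · intro x hx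
      exact (hpos (hΔ x hx).1 (hΔ x hx).2 i).ne'
  have hΔne : (stdSimplex ℝ (Fin n)).Nonempty :=
    ⟨Pi.single ⟨0, hn⟩ 1, single_mem_stdSimplex ℝ _⟩
  obtain ⟨x0, hx0, hmax⟩ := (isCompact_stdSimplex _ _).exists_isMaxOn hΔne hFcont
  set w : Fin n → ℝ := P *ᵥ x0 with hwdef
  have hw : ∀ i, 0 < w i := hpos (hΔ x0 hx0).1 (hΔ x0 hx0).2
  set r : ℝ := g w with hrdef
  have hrw : ∀ i, r * w i ≤ (B *ᵥ w) i := by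
    intro i
    have h1 : r ≤ (B *ᵥ w) i / w i := Finset.inf'_le _ (mem_univ i)
    exact (le_div_iff₀ (hw i)).mp h1
  have hr0 : 0 ≤ r := by
    obtain ⟨i, _, hi⟩ := Finset.exists_mem_eq_inf' hne (fun i => (B *ᵥ w) i / w i)
    rw [hrdef, hgdef]
    simp only
    rw [hi]
    exact div_nonneg (mulVec_nonneg hB (fun j => (hw j).le) i) (hw i).le
  -- the maximality bound: for every strictly positive v, g v ≤ r
  have hub : ∀ v : Fin n → ℝ, (∀ i, 0 < v i) → g v ≤ r := by
    intro v hv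
    have hsum : 0 < ∑ i, v i := Finset.sum_pos (fun i _ => hv i) hne
    set c : ℝ := (∑ i, v i)⁻¹ with hcdef
    have hc : 0 < c := inv_pos.2 hsum
    have hmem : c • v ∈ stdSimplex ℝ (Fin n) := by
      constructor
      · intro i
        exact mul_nonneg hc.le (hv i).le
      · simp only [Pi.smul_apply, smul_eq_mul, ← Finset.mul_sum]
        exact inv_mul_cancel₀ hsum.ne'
    have h1 : g (P *ᵥ (c • v)) ≤ r := hmax hmem
    have hPcv : P *ᵥ (c • v) = c • (P *ᵥ v) := Matrix.mulVec_smul P c v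
    have hgsc : g (c • (P *ᵥ v)) = g (P *ᵥ v) := by
      rw [hgdef]
      simp only
      apply Finset.inf'_congr hne rfl
      intro i _
      rw [Matrix.mulVec_smul]
      simp only [Pi.smul_apply, smul_eq_mul]
      rw [mul_div_mul_left _ _ hc.ne']
    have hPv : ∀ i, 0 < (P *ᵥ v) i := hpos (fun i => (hv i).le) ⟨⟨0, hn⟩, hv _⟩
    have h2 : g v ≤ g (P *ᵥ v) := by
      have hBv : ∀ i, g v * v i ≤ (B *ᵥ v) i := by
        intro i
        exact (le_div_iff₀ (hv i)).mp (Finset.inf'_le _ (mem_univ i))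
      rw [hgdef]
      simp only
      apply Finset.le_inf'
      intro i _
      rw [le_div_iff₀ (hPv i)]
      have hmono := mulVec_mono hPnn (x := fun j => g v * v j) (y := B *ᵥ v) hBv i
      have hl : (P *ᵥ fun j => g v * v j) i = g v * (P *ᵥ v) i := by
        have : (fun j => g v * v j) = g v • v := by funext j; simp [smul_eq_mul]
        rw [this, Matrix.mulVec_smul]
        simp [smul_eq_mul]
      rw [hl] at hmono
      calc g v * (P *ᵥ v) i ≤ (P *ᵥ (B *ᵥ v)) i := hmono
        _ = (B *ᵥ (P *ᵥ v)) i := by rw [← comm_pow]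
    calc g v ≤ g (P *ᵥ v) := h2
      _ = g (c • (P *ᵥ v)) := hgsc.symm
      _ = g (P *ᵥ (c • v)) := by rw [hPcv]
      _ ≤ r := h1
  -- B *ᵥ w = r • w
  have hBw : B *ᵥ w = r • w := by
    by_contra hcon
    have hexi : ∃ i, (B *ᵥ w) i ≠ r * w i := by
      by_contra hc
      push_neg at hc
      exact hcon (funext fun i => by rw [hc i]; simp [smul_eq_mul])
    obtain ⟨i1, hi1⟩ := hexi
    set z : Fin n → ℝ := fun i => (B *ᵥ w) i - r * w i with hzdef
    have hz0 : ∀ i, 0 ≤ z i := fun i => sub_nonneg.2 (hrw i)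
    have hzpos : ∃ i, 0 < z i := ⟨i1, lt_of_le_of_ne (sub_nonneg.2 (hrw i1))
      (fun hh => hi1 (by linarith [hh.symm, sub_eq_zero.mp hh.symm]))⟩
    have hPz : ∀ i, 0 < (P *ᵥ z) i := hpos hz0 hzpos
    set w1 : Fin n → ℝ := P *ᵥ w with hw1def
    have hw1 : ∀ i, 0 < w1 i := hpos (fun i => (hw i).le) ⟨⟨0, hn⟩, hw _⟩
    have hPzeq : ∀ i, (P *ᵥ z) i = (B *ᵥ w1) i - r * w1 i := by
      intro i
      have hz' : z = (B *ᵥ w) - r • w := by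
        funext j; simp [hzdef, smul_eq_mul]
      rw [hz', Matrix.mulVec_sub, Matrix.mulVec_smul]
      simp only [Pi.sub_apply, Pi.smul_apply, smul_eq_mul]
      rw [← comm_pow]
    have hlt : ∀ i, r < (B *ᵥ w1) i / w1 i := by
      intro i
      rw [lt_div_iff₀ (hw1 i)]
      have := hPz i
      rw [hPzeq i] at this
      linarith
    have hgw1 : r < g w1 := by
      rw [hgdef]
      simp only
      rw [Finset.lt_inf'_iff]
      intro i _
      exact hlt i
    exact absurd (hub w1 hw1) (not_le.mpr hgw1)
  -- identify r with the spectral radius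
  set B' : Matrix (Fin n) (Fin n) ℂ := B.map (algebraMap ℝ ℂ) with hB'def
  have hmemT : r ∈ {t : ℝ | ∃ μ : ℂ, μ ∈ spectrum ℂ B' ∧ t = ‖μ‖} := by
    refine ⟨(r : ℂ), ?_, by rw [Complex.norm_real, Real.norm_of_nonneg hr0]⟩
    rw [spectrum.mem_iff]
    intro hu
    have hdet := (Matrix.isUnit_iff_isUnit_det _).mp hu
    rw [isUnit_iff_ne_zero] at hdet
    apply hdet
    rw [← Matrix.exists_mulVec_eq_zero_iff]
    refine ⟨fun i => ((w i : ℝ) : ℂ), ?_, ?_⟩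
    · intro hv
      have := congrFun hv ⟨0, hn⟩
      simp only [Pi.zero_apply, Complex.ofReal_eq_zero] at this
      exact (hw ⟨0, hn⟩).ne' this
    · funext i
      rw [Matrix.sub_mulVec]
      have h1 : (algebraMap ℂ (Matrix (Fin n) (Fin n) ℂ) (r : ℂ)) *ᵥ (fun i => ((w i : ℝ) : ℂ))
          = fun i => ((r : ℂ) * (w i : ℂ)) := by
        rw [Algebra.algebraMap_eq_smul_one, Matrix.smul_mulVec, Matrix.one_mulVec]
        funext j
        simp [smul_eq_mul]
      have h2 : (B' *ᵥ (fun i => ((w i : ℝ) : ℂ))) i = (((B *ᵥ w) i : ℝ) : ℂ) := by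
        show ∑ j, B' i j * ((w j : ℝ) : ℂ) = (((B *ᵥ w) i : ℝ) : ℂ)
        rw [show (B *ᵥ w) i = ∑ j, B i j * w j from rfl]
        push_cast
        refine Finset.sum_congr rfl fun j _ => ?_
        rw [hB'def]
        simp [Matrix.map_apply, Complex.coe_algebraMap]
      rw [Pi.sub_apply, congrFun h1 i, h2, hBw]
      simp only [Pi.smul_apply, smul_eq_mul, Pi.zero_apply]
      push_cast
      ring
  have hubT : ∀ t ∈ {t : ℝ | ∃ μ : ℂ, μ ∈ spectrum ℂ B' ∧ t = ‖μ‖}, t ≤ r := by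
    rintro t ⟨μ, hμ, rfl⟩
    rw [spectrum.mem_iff] at hμ
    have hdet : (algebraMap ℂ (Matrix (Fin n) (Fin n) ℂ) μ - B').det = 0 := by
      by_contra hc
      exact hμ ((Matrix.isUnit_iff_isUnit_det _).mpr (isUnit_iff_ne_zero.2 hc))
    obtain ⟨v, hv0, hveq⟩ := (Matrix.exists_mulVec_eq_zero_iff).mpr hdet
    have heig : ∀ i, (B' *ᵥ v) i = μ * v i := by
      intro i
      have h := congrFun hveq i
      rw [Matrix.sub_mulVec] at h
      have h1 : (algebraMap ℂ (Matrix (Fin n) (Fin n) ℂ) μ) *ᵥ v = fun j => μ * v j := by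
        rw [Algebra.algebraMap_eq_smul_one, Matrix.smul_mulVec, Matrix.one_mulVec]
        funext j
        simp [smul_eq_mul]
      rw [Pi.sub_apply, congrFun h1 i, Pi.zero_apply, sub_eq_zero] at h
      exact h.symm
    obtain ⟨i, _, hi⟩ := Finset.exists_max_image Finset.univ
      (fun j => ‖v j‖ / w j) hne
    have hvi : 0 < ‖v i‖ := by
      obtain ⟨j, hj⟩ := Function.ne_iff.mp hv0
      have h1 : 0 < ‖v j‖ / w j :=
        div_pos (by simpa using hj) (hw j)
      have h2 := h1.trans_le (hi j (mem_univ j))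
      rcases div_pos_iff.mp h2 with ⟨ha, _⟩ | ⟨_, hb⟩
      · exact ha
      · exact absurd hb (not_lt.mpr (hw i).le)
    have hbound : ∀ j, ‖v j‖ ≤ ‖v i‖ / w i * w j := by
      intro j
      have := hi j (mem_univ j)
      exact (div_le_iff₀ (hw j)).mp this
    have hchain : ‖μ‖ * ‖v i‖ ≤ r * ‖v i‖ := by
      calc ‖μ‖ * ‖v i‖ = ‖(B' *ᵥ v) i‖ := by
            rw [heig i, norm_mul]
        _ = ‖∑ j, B' i j * v j‖ := rfl
        _ ≤ ∑ j, ‖B' i j * v j‖ := norm_sum_le _ _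
        _ = ∑ j, B i j * ‖v j‖ := by
            refine Finset.sum_congr rfl fun j _ => ?_
            rw [norm_mul, hB'def]
            simp only [Matrix.map_apply]
            rw [show (algebraMap ℝ ℂ) (B i j) = ((B i j : ℝ) : ℂ) from rfl,
              Complex.norm_real, Real.norm_of_nonneg (hB i j)]
        _ ≤ ∑ j, B i j * (‖v i‖ / w i * w j) :=
            Finset.sum_le_sum fun j _ => mul_le_mul_of_nonneg_left (hbound j) (hB i j)
        _ = ‖v i‖ / w i * (B *ᵥ w) i := by
            rw [mulVec_apply', Finset.mul_sum]
            refine Finset.sum_congr rfl fun j _ => ?_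
            ring
        _ = ‖v i‖ / w i * (r * w i) := by
            rw [hBw]
            simp [smul_eq_mul]
        _ = r * ‖v i‖ := by
            have hwi : w i ≠ 0 := (hw i).ne'
            field_simp
    exact le_of_mul_le_mul_right hchain hvi
  have hspec : specRad B = r := by
    unfold specRad
    exact IsGreatest.csSup_eq ⟨hmemT, hubT⟩
  exact ⟨w, hw, by rw [hspec]; exact hBw, hspec ▸ hr0⟩

end PerronAux

/-- For an irreducible singular M-matrix `M = ρ(B)I − B` (`B ≥ 0` irreducible):
if `M y ≥ 0` and `𝟙ᵀy = 1` then `M y = 0` and `y > 0`; moreover there is a unique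
positive `y` with `M y = 0` and `𝟙ᵀ y = 1`. -/
theorem irred_singular_M_matrix_kernel
    {n : ℕ} (hn : 0 < n)
    (B : Matrix (Fin n) (Fin n) ℝ) (hB : ∀ i j, 0 ≤ B i j) (hirr : MatIrred B)
    (M : Matrix (Fin n) (Fin n) ℝ)
    (hM : M = specRad B • (1 : Matrix (Fin n) (Fin n) ℝ) - B) :
    (∀ y : Fin n → ℝ, (∀ i, 0 ≤ M.mulVec y i) → ∑ i, y i = 1 →
        M.mulVec y = 0 ∧ ∀ i, 0 < y i) ∧
      (∃! y : Fin n → ℝ, (∀ i, 0 < y i) ∧ M.mulVec y = 0 ∧ ∑ i, y i = 1) := by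
  classical
  open Matrix Finset PerronAux in
  obtain ⟨w, hw, hBw, hr0⟩ := PerronAux.perron hn B hB hirr
  obtain ⟨z, hz, hBz, -⟩ := PerronAux.perron hn Bᵀ (fun i j => hB j i)
    (PerronAux.matIrred_transpose hirr)
  rw [PerronAux.specRad_transpose] at hBz
  have hMz : Mᵀ *ᵥ z = 0 := by
    rw [hM, Matrix.transpose_sub, Matrix.transpose_smul, Matrix.transpose_one,
      Matrix.sub_mulVec, Matrix.smul_mulVec, Matrix.one_mulVec, hBz, sub_self]
  have hne : (Finset.univ : Finset (Fin n)).Nonempty := ⟨⟨0, hn⟩, Finset.mem_univ _⟩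
  have hsumw : 0 < ∑ i, w i := Finset.sum_pos (fun i _ => hw i) hne
  have key : ∀ y : Fin n → ℝ, (∀ i, 0 ≤ (M *ᵥ y) i) → M *ᵥ y = 0 := by
    intro y hy
    have hdot : z ⬝ᵥ (M *ᵥ y) = 0 := by
      rw [Matrix.dotProduct_mulVec, ← Matrix.mulVec_transpose, hMz, zero_dotProduct]
    have hdot' : ∑ i, z i * (M *ᵥ y) i = 0 := hdot
    have hall := (Finset.sum_eq_zero_iff_of_nonneg
      (fun i _ => mul_nonneg (hz i).le (hy i))).mp hdot'
    funext i
    have := hall i (Finset.mem_univ i)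
    rcases mul_eq_zero.mp this with h | h
    · exact absurd h (hz i).ne'
    · exact h
  have eigOfM : ∀ y : Fin n → ℝ, M *ᵥ y = 0 → B *ᵥ y = specRad B • y := by
    intro y h
    rw [hM, Matrix.sub_mulVec, Matrix.smul_mulVec, Matrix.one_mulVec,
      sub_eq_zero] at h
    exact h.symm
  have mult : ∀ y : Fin n → ℝ, M *ᵥ y = 0 → ∑ i, y i = 1 → y = (∑ i, w i)⁻¹ • w := by
    intro y h hsum
    obtain ⟨t, rfl⟩ := PerronAux.eigen_multiple hn hB hirr hw hBw (eigOfM y h)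
    have hts : t * ∑ i, w i = 1 := by
      rw [Finset.mul_sum]
      rw [← hsum]
      exact Finset.sum_congr rfl fun i _ => by simp [smul_eq_mul]
    have ht : t = (∑ i, w i)⁻¹ := eq_inv_of_mul_eq_one_left hts
    rw [ht]
  have hMw0 : M *ᵥ ((∑ i, w i)⁻¹ • w) = 0 := by
    rw [Matrix.mulVec_smul, hM, Matrix.sub_mulVec, Matrix.smul_mulVec,
      Matrix.one_mulVec, hBw, sub_self, smul_zero]
  have hposc : ∀ i, 0 < ((∑ i, w i)⁻¹ • w) i := fun i => by
    simp only [Pi.smul_apply, smul_eq_mul]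
    exact mul_pos (inv_pos.2 hsumw) (hw i)
  constructor
  · intro y hy hsum
    have h0 := key y hy
    refine ⟨h0, ?_⟩
    rw [mult y h0 hsum]
    exact hposc
  · refine ⟨(∑ i, w i)⁻¹ • w, ⟨hposc, hMw0, ?_⟩, ?_⟩
    · simp only [Pi.smul_apply, smul_eq_mul, ← Finset.mul_sum]
      exact inv_mul_cancel₀ hsumw.ne'
    · rintro y' ⟨-, hMy', hsum'⟩
      exact mult y' hMy' hsum'
end

section
/- Let A ∈ ℝ^{n×n×n} be an entrywise nonnegative tensor that is weakly irreducible, and let p ≥ 3. Define Φ_j(x) = (∑_{k,l} a_{jkl} x_k x_l) / x_j^{p−1} for x ∈ ℝ_{>0}^n. If p = 3, then the spectral radius r (the largest H-eigenvalue, i.e., the largest λ such that ∑_{k,l} a_{jkl} x_k x_l = λ x_j^2 for some x > 0) satisfies r = min_{x > 0} max_{j ∈ [n]} Φ_j(x). -/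
open scoped BigOperators

/-- Min-max Collatz–Wielandt formula for the largest H-eigenvalue of a weakly
irreducible nonnegative tensor of order 3 (case `p = 3`):
`r = min_{x>0} max_j (∑_{k,l} a_{jkl} x_k x_l) / x_j²`. -/
theorem collatz_wielandt_H_eigenvalue_order3
    {n : ℕ} (hn : 0 < n)
    (a : Fin n → Fin n → Fin n → ℝ) (ha : ∀ j k l, 0 ≤ a j k l)
    (hwirr : MatIrred (Matrix.of fun j k => ∑ l, (a j k l + a j l k)))
    (r : ℝ)
    (hr : IsGreatest {lam : ℝ | ∃ x : Fin n → ℝ, (∀ i, 0 < x i) ∧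
        ∀ j, ∑ k, ∑ l, a j k l * x k * x l = lam * x j ^ 2} r) :
    IsLeast {v : ℝ | ∃ x : Fin n → ℝ, (∀ i, 0 < x i) ∧
      v = Finset.univ.sup' (Finset.univ_nonempty_iff.mpr ⟨⟨0, hn⟩⟩)
            (fun j => (∑ k, ∑ l, a j k l * x k * x l) / x j ^ 2)} r := by
  obtain ⟨⟨x, hx, hex⟩, -⟩ := hr
  have hne : (Finset.univ : Finset (Fin n)).Nonempty :=
    Finset.univ_nonempty_iff.mpr ⟨⟨0, hn⟩⟩
  constructor
  · refine ⟨x, hx, ?_⟩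
    have hconst : ∀ j ∈ (Finset.univ : Finset (Fin n)),
        (∑ k, ∑ l, a j k l * x k * x l) / x j ^ 2 = r := by
      intro j _
      rw [hex j]
      exact mul_div_cancel_right₀ r (pow_pos (hx j) 2).ne'
    rw [Finset.sup'_congr hne rfl hconst, Finset.sup'_const]
  · rintro v ⟨z, hz, rfl⟩
    obtain ⟨j0, -, hj0⟩ := Finset.exists_mem_eq_sup' hne (fun j => x j / z j)
    set t := x j0 / z j0 with ht
    have ht0 : 0 < t := div_pos (hx j0) (hz j0)
    have hle : ∀ k, x k ≤ t * z k := by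
      intro k
      have h := le_of_le_of_eq
        (Finset.le_sup' (f := fun j => x j / z j) (Finset.mem_univ k)) hj0
      rwa [div_le_iff₀ (hz k)] at h
    have hxj0 : t * z j0 = x j0 := div_mul_cancel₀ _ (hz j0).ne'
    have key : r * x j0 ^ 2 ≤
        (Finset.univ.sup' hne fun j => (∑ k, ∑ l, a j k l * z k * z l) / z j ^ 2)
          * x j0 ^ 2 := by
      set v := Finset.univ.sup' hne fun j => (∑ k, ∑ l, a j k l * z k * z l) / z j ^ 2
      have h1 : r * x j0 ^ 2 ≤ t ^ 2 * ∑ k, ∑ l, a j0 k l * z k * z l := by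
        rw [← hex j0]
        calc ∑ k, ∑ l, a j0 k l * x k * x l
            ≤ ∑ k, ∑ l, a j0 k l * (t * z k) * (t * z l) := by
              refine Finset.sum_le_sum fun k _ => Finset.sum_le_sum fun l _ => ?_
              have h1 : a j0 k l * x k ≤ a j0 k l * (t * z k) :=
                mul_le_mul_of_nonneg_left (hle k) (ha _ _ _)
              have h2 : 0 ≤ a j0 k l * (t * z k) :=
                mul_nonneg (ha _ _ _) (mul_nonneg ht0.le (hz k).le)
              exact mul_le_mul h1 (hle l) (hx l).le h2
          _ = t ^ 2 * ∑ k, ∑ l, a j0 k l * z k * z l := by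
              rw [Finset.mul_sum]
              refine Finset.sum_congr rfl fun k _ => ?_
              rw [Finset.mul_sum]
              exact Finset.sum_congr rfl fun l _ => by ring
      have h2 : (∑ k, ∑ l, a j0 k l * z k * z l) ≤ v * z j0 ^ 2 := by
        have := Finset.le_sup' (f := fun j => (∑ k, ∑ l, a j k l * z k * z l) / z j ^ 2)
          (Finset.mem_univ j0)
        rwa [div_le_iff₀ (pow_pos (hz j0) 2)] at this
      calc r * x j0 ^ 2 ≤ t ^ 2 * ∑ k, ∑ l, a j0 k l * z k * z l := h1
        _ ≤ t ^ 2 * (v * z j0 ^ 2) :=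
            mul_le_mul_of_nonneg_left h2 (sq_nonneg t)
        _ = v * (t * z j0) ^ 2 := by ring
        _ = v * x j0 ^ 2 := by rw [hxj0]
    exact le_of_mul_le_mul_right key (pow_pos (hx j0) 2)
end

section
/- Let J ∈ ℝ^{n×n} be a nonsingular M-matrix, x ∈ ℝ_{>0}^n, c ∈ ℝ_{>0}^n, and r ∈ ℝ_{≥0}^n with r ≠ 0. Then the bordered matrix [[J, x],[cᵀ, 0]] ∈ ℝ^{(n+1)×(n+1)} is nonsingular, and the unique solution (d, δ) of J d + δ x + r = 0, cᵀ d = 0 satisfies δ = − (cᵀ J^{-1} r)/(cᵀ J^{-1} x) < 0. -/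
open scoped BigOperators
open Matrix

/-- A nonsingular M-matrix: `M = s•I − B` with `B ≥ 0` entrywise, `s > ρ(B)`, and
nonpositive off-diagonal entries. -/
def IsNonsingMMatrix {n : ℕ} (M : Matrix (Fin n) (Fin n) ℝ) : Prop :=
  ∃ (s : ℝ) (B : Matrix (Fin n) (Fin n) ℝ),
    (∀ i j, 0 ≤ B i j) ∧ M = s • (1 : Matrix (Fin n) (Fin n) ℝ) - B ∧ specRad B < s

open Filter Topology

attribute [local instance] Matrix.linftyOpNormedAddCommGroup Matrix.linftyOpNormedSpace
  Matrix.linftyOpNormedRing Matrix.linftyOpNormedAlgebra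

instance matCS {m : Type*} [Fintype m] {α : Type*} [NormedRing α] [CompleteSpace α] :
    CompleteSpace (Matrix m m α) :=
  (inferInstanceAs (CompleteSpace (m → m → α)))

lemma nnnorm_map_complex {m p : Type*} [Fintype m] [Fintype p] (M : Matrix m p ℝ) :
    ‖M.map (algebraMap ℝ ℂ)‖₊ = ‖M‖₊ := by
  rw [Matrix.linfty_opNNNorm_def, Matrix.linfty_opNNNorm_def]
  congr 1
  funext i
  exact Finset.sum_congr rfl fun j _ => by simp [Matrix.map_apply]

lemma pow_entry_nonneg {n : ℕ} {A : Matrix (Fin n) (Fin n) ℝ}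
    (hA : ∀ i j, 0 ≤ A i j) (k : ℕ) : ∀ i j, 0 ≤ (A ^ k) i j := by
  induction k with
  | zero =>
    intro i j
    rw [pow_zero]
    by_cases h : i = j <;> simp [Matrix.one_apply, h]
  | succ k ih =>
    intro i j
    rw [pow_succ, Matrix.mul_apply]
    exact Finset.sum_nonneg fun l _ => mul_nonneg (ih i l) (hA l j)

lemma mmatrix_key {n : ℕ} (hn : 0 < n) {s : ℝ} {B : Matrix (Fin n) (Fin n) ℝ}
    (hB : ∀ i j, 0 ≤ B i j) (hs : specRad B < s) :
    IsUnit (s • (1 : Matrix (Fin n) (Fin n) ℝ) - B) ∧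
      ∀ i j, 0 ≤ (s • (1 : Matrix (Fin n) (Fin n) ℝ) - B)⁻¹ i j := by
  haveI : Nonempty (Fin n) := Fin.pos_iff_nonempty.mp hn
  set Bc : Matrix (Fin n) (Fin n) ℂ := B.map (algebraMap ℝ ℂ) with hBc
  -- spectrum facts
  have hne : (spectrum ℂ Bc).Nonempty := spectrum.nonempty Bc
  have hSeq : {r : ℝ | ∃ μ : ℂ, μ ∈ spectrum ℂ Bc ∧ r = ‖μ‖}
      = (fun μ : ℂ => ‖μ‖) '' spectrum ℂ Bc := by
    ext y; simp [Set.mem_image, eq_comm]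
  have hbdd : BddAbove {r : ℝ | ∃ μ : ℂ, μ ∈ spectrum ℂ Bc ∧ r = ‖μ‖} := by
    rw [hSeq]
    exact ((spectrum.isCompact Bc).image continuous_norm).bddAbove
  have hle : ∀ μ ∈ spectrum ℂ Bc, ‖μ‖ ≤ specRad B := fun μ hμ =>
    le_csSup hbdd ⟨μ, hμ, rfl⟩
  have hρ0 : 0 ≤ specRad B := by
    obtain ⟨μ₀, hμ₀⟩ := hne
    exact le_trans (norm_nonneg μ₀) (hle μ₀ hμ₀)
  have hs0 : 0 < s := lt_of_le_of_lt hρ0 hs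
  set t : ℝ := (specRad B + s) / 2 with ht
  have ht1 : specRad B < t := by rw [ht]; linarith
  have ht2 : t < s := by rw [ht]; linarith
  have ht0 : 0 < t := lt_of_le_of_lt hρ0 ht1
  -- spectral radius bound
  have hsr : spectralRadius ℂ Bc < ENNReal.ofReal t := by
    refine lt_of_le_of_lt (iSup₂_le fun μ hμ => ?_)
      ((ENNReal.ofReal_lt_ofReal_iff ht0).mpr ht1)
    rw [← ENNReal.ofReal_coe_nnreal, coe_nnnorm]
    exact ENNReal.ofReal_le_ofReal (hle μ hμ)
  -- Gelfand
  have hev : ∀ᶠ m in atTop, ‖Bc ^ m‖ ≤ t ^ m := by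
    have h := spectrum.pow_norm_pow_one_div_tendsto_nhds_spectralRadius Bc
    filter_upwards [h.eventually_lt_const hsr, eventually_ge_atTop 1] with m hm hm1
    have hm0 : (m : ℝ) ≠ 0 := Nat.cast_ne_zero.mpr (by omega)
    have hlt : ‖Bc ^ m‖ ^ (1 / (m : ℝ)) < t := by
      have := (ENNReal.ofReal_lt_ofReal_iff ht0).mp hm
      exact this
    calc ‖Bc ^ m‖ = (‖Bc ^ m‖ ^ (1 / (m : ℝ))) ^ (m : ℕ) := by
          rw [← Real.rpow_natCast (‖Bc ^ m‖ ^ (1 / (m : ℝ))) m,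
            ← Real.rpow_mul (norm_nonneg _), one_div_mul_cancel hm0, Real.rpow_one]
      _ ≤ t ^ m := pow_le_pow_left₀ (Real.rpow_nonneg (norm_nonneg _) _) hlt.le m
  -- real side
  set A : Matrix (Fin n) (Fin n) ℝ := s⁻¹ • B with hA
  have hA0 : ∀ i j, 0 ≤ A i j := fun i j => by
    simpa [hA] using mul_nonneg (inv_nonneg.mpr hs0.le) (hB i j)
  have hnormAk : ∀ k, ‖A ^ k‖ = s⁻¹ ^ k * ‖Bc ^ k‖ := by
    intro k
    have h1 : A ^ k = (s⁻¹ ^ k) • B ^ k := by rw [hA, smul_pow]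
    have h2 : Bc ^ k = (B ^ k).map (algebraMap ℝ ℂ) := by
      rw [hBc, ← RingHom.mapMatrix_apply, ← RingHom.mapMatrix_apply, ← map_pow]
    rw [h1, norm_smul, h2]
    have := congrArg (fun x : NNReal => (x : ℝ)) (nnnorm_map_complex (B ^ k))
    simp only [coe_nnnorm] at this
    rw [this, Real.norm_eq_abs, abs_pow, abs_inv, abs_of_pos hs0]
  have hevA : ∀ᶠ k in atTop, ‖A ^ k‖ ≤ (t / s) ^ k := by
    filter_upwards [hev] with k hk
    rw [hnormAk k, div_pow, div_eq_mul_inv, mul_comm (t ^ k), ← inv_pow]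
    exact mul_le_mul_of_nonneg_left hk (by positivity)
  have hts0 : 0 ≤ t / s := by positivity
  have hts1 : t / s < 1 := (div_lt_one hs0).mpr ht2
  have hsum : Summable fun k : ℕ => A ^ k :=
    Summable.of_norm_bounded_eventually_nat (summable_geometric_of_lt_one hts0 hts1) hevA
  set S : Matrix (Fin n) (Fin n) ℝ := ∑' k : ℕ, A ^ k with hSdef
  have hS : HasSum (fun k : ℕ => A ^ k) S := hsum.hasSum
  have hAN : Tendsto (fun N : ℕ => A ^ N) atTop (𝓝 0) := by
    refine squeeze_zero_norm' hevA ?_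
    exact tendsto_pow_atTop_nhds_zero_of_lt_one hts0 hts1
  have hT : Tendsto (fun N : ℕ => ∑ k ∈ Finset.range N, A ^ k) atTop (𝓝 S) :=
    hS.tendsto_sum_nat
  have hmul1 : (1 - A) * S = 1 := by
    have h1 : Tendsto (fun N : ℕ => (1 - A) * ∑ k ∈ Finset.range N, A ^ k) atTop
        (𝓝 ((1 - A) * S)) := hT.const_mul _
    have h2 : (fun N : ℕ => (1 - A) * ∑ k ∈ Finset.range N, A ^ k)
        = fun N : ℕ => 1 - A ^ N := funext fun N => mul_neg_geom_sum A N
    rw [h2] at h1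
    have h3 : Tendsto (fun N : ℕ => (1 : Matrix (Fin n) (Fin n) ℝ) - A ^ N) atTop (𝓝 1) := by
      simpa using (tendsto_const_nhds (x := (1 : Matrix (Fin n) (Fin n) ℝ))).sub hAN
    exact tendsto_nhds_unique h1 h3
  have hmul2 : S * (1 - A) = 1 := by
    have h1 : Tendsto (fun N : ℕ => (∑ k ∈ Finset.range N, A ^ k) * (1 - A)) atTop
        (𝓝 (S * (1 - A))) := hT.mul_const _
    have h2 : (fun N : ℕ => (∑ k ∈ Finset.range N, A ^ k) * (1 - A))
        = fun N : ℕ => 1 - A ^ N := funext fun N => geom_sum_mul_neg A N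
    rw [h2] at h1
    have h3 : Tendsto (fun N : ℕ => (1 : Matrix (Fin n) (Fin n) ℝ) - A ^ N) atTop (𝓝 1) := by
      simpa using (tendsto_const_nhds (x := (1 : Matrix (Fin n) (Fin n) ℝ))).sub hAN
    exact tendsto_nhds_unique h1 h3
  -- J = s • (1 - A)
  have hJeq : s • (1 : Matrix (Fin n) (Fin n) ℝ) - B = s • ((1 : Matrix (Fin n) (Fin n) ℝ) - A) := by
    rw [smul_sub, hA, smul_smul, mul_inv_cancel₀ hs0.ne', one_smul]
  have hright : (s • (1 : Matrix (Fin n) (Fin n) ℝ) - B) * (s⁻¹ • S) = 1 := by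
    rw [hJeq, smul_mul_assoc, mul_smul_comm, smul_smul, mul_inv_cancel₀ hs0.ne', one_smul, hmul1]
  have hleft : (s⁻¹ • S) * (s • (1 : Matrix (Fin n) (Fin n) ℝ) - B) = 1 := by
    rw [hJeq, smul_mul_assoc, mul_smul_comm, smul_smul, inv_mul_cancel₀ hs0.ne', one_smul, hmul2]
  refine ⟨⟨⟨_, s⁻¹ • S, hright, hleft⟩, rfl⟩, ?_⟩
  have hinv : (s • (1 : Matrix (Fin n) (Fin n) ℝ) - B)⁻¹ = s⁻¹ • S :=
    Matrix.inv_eq_right_inv hright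
  intro i j
  rw [hinv]
  have hentry : HasSum (fun k : ℕ => (A ^ k) i j) (S i j) := by
    let e : Matrix (Fin n) (Fin n) ℝ →ₗ[ℝ] ℝ :=
      { toFun := fun M => M i j
        map_add' := fun M N => rfl
        map_smul' := fun c M => rfl }
    exact hS.map e e.continuous_of_finiteDimensional
  have hSij : 0 ≤ S i j := hentry.nonneg fun k => pow_entry_nonneg hA0 k i j
  simpa using mul_nonneg (inv_nonneg.mpr hs0.le) hSij

/-- For a nonsingular M-matrix `J`, positive `x, c` and nonzero nonnegative `r`,
the bordered matrix `[[J, x],[cᵀ, 0]]` is nonsingular, and the unique solution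
`(d, δ)` of `J d + δ x + r = 0`, `cᵀ d = 0` has
`δ = −(cᵀJ⁻¹r)/(cᵀJ⁻¹x) < 0`. -/
theorem bordered_nonsing_M_matrix_delta
    {n : ℕ} (J : Matrix (Fin n) (Fin n) ℝ) (hJ : IsNonsingMMatrix J)
    (x : Fin n → ℝ) (hx : ∀ i, 0 < x i)
    (c : Fin n → ℝ) (hc : ∀ i, 0 < c i)
    (r : Fin n → ℝ) (hr : ∀ i, 0 ≤ r i) (hr0 : r ≠ 0) :
    IsUnit (Matrix.fromBlocks J (Matrix.of fun i (_ : Unit) => x i)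
        (Matrix.of fun (_ : Unit) j => c j) (0 : Matrix Unit Unit ℝ)) ∧
      (∃! dδ : (Fin n → ℝ) × ℝ,
        J.mulVec dδ.1 + dδ.2 • x + r = 0 ∧ c ⬝ᵥ dδ.1 = 0) ∧
      (∀ dδ : (Fin n → ℝ) × ℝ,
        J.mulVec dδ.1 + dδ.2 • x + r = 0 → c ⬝ᵥ dδ.1 = 0 →
          dδ.2 = -(c ⬝ᵥ J⁻¹.mulVec r) / (c ⬝ᵥ J⁻¹.mulVec x) ∧ dδ.2 < 0) := by
  rcases Nat.eq_zero_or_pos n with h0 | hn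
  · subst h0
    exact absurd (funext fun i => i.elim0) hr0
  haveI : Nonempty (Fin n) := Fin.pos_iff_nonempty.mp hn
  obtain ⟨s, B, hB, hJeq, hs⟩ := hJ
  obtain ⟨hu, hK⟩ : IsUnit J ∧ ∀ i j, 0 ≤ J⁻¹ i j := by
    rw [hJeq]; exact mmatrix_key hn hB hs
  have hdet : IsUnit J.det := (Matrix.isUnit_iff_isUnit_det J).mp hu
  have hJinvJ : J⁻¹ * J = 1 := Matrix.nonsing_inv_mul J hdet
  have hJJinv : J * J⁻¹ = 1 := Matrix.mul_nonsing_inv J hdet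
  have hrow : ∀ i, ∃ j, 0 < J⁻¹ i j := by
    intro i
    by_contra h
    push_neg at h
    have hz : ∀ j, J⁻¹ i j = 0 := fun j => le_antisymm (h j) (hK i j)
    have h1 : (J⁻¹ * J) i i = 0 := by
      rw [Matrix.mul_apply]
      exact Finset.sum_eq_zero fun k _ => by rw [hz k, zero_mul]
    rw [hJinvJ, Matrix.one_apply_eq] at h1
    exact one_ne_zero h1
  have hcol : ∀ j, ∃ i, 0 < J⁻¹ i j := by
    intro j
    by_contra h
    push_neg at h
    have hz : ∀ i, J⁻¹ i j = 0 := fun i => le_antisymm (h i) (hK i j)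
    have h1 : (J * J⁻¹) j j = 0 := by
      rw [Matrix.mul_apply]
      exact Finset.sum_eq_zero fun k _ => by rw [hz k, mul_zero]
    rw [hJJinv, Matrix.one_apply_eq] at h1
    exact one_ne_zero h1
  set u : Fin n → ℝ := J⁻¹.mulVec x with hudef
  set v : Fin n → ℝ := J⁻¹.mulVec r with hvdef
  have hu_pos : ∀ i, 0 < u i := by
    intro i
    obtain ⟨j0, hj0⟩ := hrow i
    exact Finset.sum_pos' (fun j _ => mul_nonneg (hK i j) (hx j).le)
      ⟨j0, Finset.mem_univ j0, mul_pos hj0 (hx j0)⟩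
  have hv0 : ∀ i, 0 ≤ v i := by
    intro i
    rw [hvdef]
    simp only [Matrix.mulVec, dotProduct]
    exact Finset.sum_nonneg fun j _ => mul_nonneg (hK i j) (hr j)
  obtain ⟨j0, hrj0⟩ : ∃ j, 0 < r j := by
    by_contra h
    push_neg at h
    exact hr0 (funext fun j => le_antisymm (h j) (hr j))
  obtain ⟨i0, hi0⟩ := hcol j0
  have hv_pos : 0 < v i0 :=
    Finset.sum_pos' (fun j _ => mul_nonneg (hK i0 j) (hr j))
      ⟨j0, Finset.mem_univ j0, mul_pos hi0 hrj0⟩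
  set α : ℝ := c ⬝ᵥ u with hαdef
  set β : ℝ := c ⬝ᵥ v with hβdef
  have hα : 0 < α :=
    Finset.sum_pos (fun i _ => mul_pos (hc i) (hu_pos i)) Finset.univ_nonempty
  have hβ : 0 < β :=
    Finset.sum_pos' (fun i _ => mul_nonneg (hc i).le (hv0 i))
      ⟨i0, Finset.mem_univ i0, mul_pos (hc i0) hv_pos⟩
  have hJu : J.mulVec u = x := by
    rw [hudef, Matrix.mulVec_mulVec, hJJinv, Matrix.one_mulVec]
  have hJv : J.mulVec v = r := by
    rw [hvdef, Matrix.mulVec_mulVec, hJJinv, Matrix.one_mulVec]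
  have hchar : ∀ d : Fin n → ℝ, ∀ δ : ℝ, J.mulVec d + δ • x + r = 0 → c ⬝ᵥ d = 0 →
      δ = -β / α ∧ d = (β / α) • u - v := by
    intro d δ h1 h2
    have h3 : J.mulVec d = -(δ • x + r) := by
      rw [add_assoc, add_eq_zero_iff_eq_neg] at h1
      exact h1
    have hd : d = -(δ • u + v) := by
      have h4 : d = J⁻¹.mulVec (J.mulVec d) := by
        rw [Matrix.mulVec_mulVec, hJinvJ, Matrix.one_mulVec]
      rw [h4, h3, Matrix.mulVec_neg, Matrix.mulVec_add, Matrix.mulVec_smul, ← hudef, ← hvdef]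
    have h5 : δ * α + β = 0 := by
      have h6 : c ⬝ᵥ d = -(δ * α + β) := by
        rw [hd, dotProduct_neg, dotProduct_add, dotProduct_smul, smul_eq_mul,
          ← hαdef, ← hβdef]
      rw [h2] at h6
      linarith
    have hδ : δ = -β / α := by
      field_simp
      linarith
    refine ⟨hδ, ?_⟩
    rw [hd, hδ]
    funext i
    simp only [Pi.neg_apply, Pi.add_apply, Pi.smul_apply, Pi.sub_apply, smul_eq_mul]
    field_simp
    ring
  have hδ0 : -β / α < 0 := div_neg_of_neg_of_pos (by linarith) hα
  -- the distinguished solution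
  set d0 : Fin n → ℝ := (β / α) • u - v with hd0def
  have hsol1 : J.mulVec d0 + (-β / α) • x + r = 0 := by
    rw [hd0def, Matrix.mulVec_sub, Matrix.mulVec_smul, hJu, hJv]
    funext i
    simp only [Pi.add_apply, Pi.sub_apply, Pi.smul_apply, Pi.zero_apply, smul_eq_mul]
    field_simp
    ring
  have hsol2 : c ⬝ᵥ d0 = 0 := by
    rw [hd0def, dotProduct_sub, dotProduct_smul, smul_eq_mul, ← hαdef, ← hβdef]
    field_simp
    ring
  refine ⟨?_, ⟨(d0, -β / α), ⟨hsol1, hsol2⟩, ?_⟩, ?_⟩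
  · -- bordered matrix is a unit
    haveI := J.invertibleOfIsUnitDet hdet
    rw [Matrix.isUnit_iff_isUnit_det, Matrix.det_fromBlocks₁₁, Matrix.invOf_eq_nonsing_inv]
    have hent : ((0 : Matrix Unit Unit ℝ) -
        (Matrix.of fun (_ : Unit) j => c j) * J⁻¹ * (Matrix.of fun i (_ : Unit) => x i))
          = Matrix.of fun (_ : Unit) (_ : Unit) => -α := by
      funext a b
      simp only [Matrix.sub_apply, Matrix.zero_apply, Matrix.mul_apply, Matrix.of_apply,
        hαdef, dotProduct, hudef, Matrix.mulVec, Finset.sum_mul, Finset.mul_sum]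
      rw [Finset.sum_comm]
      simp [mul_assoc]
    rw [hent]
    have : (Matrix.of fun (_ : Unit) (_ : Unit) => -α).det = -α := Matrix.det_unique _
    rw [this]
    exact hdet.mul (isUnit_iff_ne_zero.mpr (by linarith))
  · -- uniqueness
    rintro ⟨d, δ⟩ ⟨h1, h2⟩
    obtain ⟨hδ, hd⟩ := hchar d δ h1 h2
    simp only [Prod.mk.injEq]
    exact ⟨hd, hδ⟩
  · -- value and sign of δ
    rintro ⟨d, δ⟩ h1 h2
    obtain ⟨hδ, -⟩ := hchar d δ h1 h2
    exact ⟨hδ, hδ ▸ hδ0⟩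
end
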